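/- Let S be a finite set and f : 2^S → ℝ a normalized monotone submodular function. Then f equals the pointwise minimum of a finite family of normalized monotone submodular functions each of the form B ↦ min( c · |A ∩ B| , c ) + ∑_{k ∈ B \ A} w_k with A ⊆ S, c ≥ 0, and nonnegative weights w_k; in particular a family of size at most 2^{|S|} suffices. -/

import Mathlib

section Aux
variable {ι : Type*} [DecidableEq ι] (f : Finset ι → ℝ)

/-- subadditivity over singletons added to a base set -/
lemma aux_sum_singletons
    (hnorm : f ∅ = 0)
    (hmono : ∀ A B : Finset ι, A ⊆ B → f A ≤ f B)
    (hsub : ∀ A B : Finset ι, A ⊆ B → ∀ v ∉ B,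
      f (insert v A) - f A ≥ f (insert v B) - f B) :
    ∀ (T X : Finset ι), f (X ∪ T) ≤ f X + ∑ k ∈ T, f {k} := by
  intro T
  induction T using Finset.induction_on with
  | empty => intro X; simp
  | @insert a T ha ih =>
    intro X
    rw [Finset.sum_insert ha]
    have h0 : 0 ≤ f {a} := by
      have := hmono ∅ {a} (Finset.empty_subset _); linarith
    by_cases hax : a ∈ X ∪ T
    · have hXT : X ∪ insert a T = X ∪ T := by
        rw [Finset.union_insert, Finset.insert_eq_self.2 hax]
      rw [hXT]
      linarith [ih X]
    · have hXT : X ∪ insert a T = insert a (X ∪ T) := Finset.union_insert _ _ _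
      rw [hXT]
      have hs := hsub ∅ (X ∪ T) (Finset.empty_subset _) a hax
      rw [hnorm] at hs
      have : insert a (∅ : Finset ι) = {a} := rfl
      rw [this] at hs
      linarith [ih X]

lemma aux_min_step (c : ℝ) (hc : 0 ≤ c) (m : ℕ) :
    min (c * ((m : ℝ) + 1)) c - min (c * (m : ℝ)) c = if m = 0 then c else 0 := by
  rcases Nat.eq_zero_or_pos m with h | h
  · subst h; simp [min_eq_left hc]
  · have h1 : (1 : ℝ) ≤ (m : ℝ) := by exact_mod_cast h
    have h2 : c ≤ c * (m : ℝ) := le_mul_of_one_le_right hc h1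
    have h3 : c ≤ c * ((m : ℝ) + 1) := by nlinarith
    rw [min_eq_right h2, min_eq_right h3, if_neg (by omega)]
    ring

end Aux

/-- For a finite ground set `S` (modelled as a finite type `ι`) and a normalized
monotone submodular function `f`, `f` is the pointwise minimum of a finite family
(of size at most `2^|S|`) of normalized monotone submodular functions, each of the
form `B ↦ min(c·|A ∩ B|, c) + ∑_{k ∈ B \ A} w k` with `A ⊆ S`, `c ≥ 0` and
nonnegative weights `w`. -/
theorem submodular_eq_min_of_SCMMs {ι : Type*} [Fintype ι] [DecidableEq ι]
    (f : Finset ι → ℝ)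
    (hnorm : f ∅ = 0)
    (hmono : ∀ A B : Finset ι, A ⊆ B → f A ≤ f B)
    (hsub : ∀ A B : Finset ι, A ⊆ B → ∀ v ∉ B,
      f (insert v A) - f A ≥ f (insert v B) - f B) :
    ∃ (r : ℕ) (A : Fin r → Finset ι) (c : Fin r → ℝ) (w : Fin r → ι → ℝ),
      0 < r ∧ r ≤ 2 ^ (Fintype.card ι) ∧
      (∀ i, 0 ≤ c i) ∧ (∀ i k, 0 ≤ w i k) ∧
      (∀ i : Fin r,
        let g : Finset ι → ℝ := fun B =>
          min (c i * ((A i ∩ B).card : ℝ)) (c i) + ∑ k ∈ B \ A i, w i k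
        g ∅ = 0 ∧
        (∀ B₁ B₂ : Finset ι, B₁ ⊆ B₂ → g B₁ ≤ g B₂) ∧
        (∀ B₁ B₂ : Finset ι, B₁ ⊆ B₂ → ∀ v ∉ B₂,
          g (insert v B₁) - g B₁ ≥ g (insert v B₂) - g B₂)) ∧
      (∀ B : Finset ι,
        f B = ⨅ i : Fin r,
          (min (c i * ((A i ∩ B).card : ℝ)) (c i) + ∑ k ∈ B \ A i, w i k)) := by
  classical
  have hf0 : ∀ X : Finset ι, 0 ≤ f X := fun X => by
    have := hmono ∅ X (Finset.empty_subset _); linarith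
  set n := Fintype.card ι with hn
  have hcard : Fintype.card (Finset ι) = 2 ^ n := Fintype.card_finset
  let e : Fin (2 ^ n) ≃ Finset ι := (Fintype.equivFinOfCardEq hcard).symm
  haveI : Nonempty (Fin (2 ^ n)) := ⟨e.symm ∅⟩
  refine ⟨2 ^ n, fun i => e i, fun i => f (e i), fun _ k => f {k},
    pow_pos (by norm_num) n, le_rfl, fun i => hf0 _, fun _ k => hf0 _, ?_, ?_⟩
  · -- each member is an SCMM
    intro i
    set A : Finset ι := e i with hA
    set c : ℝ := f (e i) with hc
    have hc0 : 0 ≤ c := hf0 _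
    refine ⟨?_, ?_, ?_⟩
    · -- normalized
      simp [min_eq_left hc0, hf0]
    · -- monotone
      intro B₁ B₂ hB
      have hm : ((A ∩ B₁).card : ℝ) ≤ ((A ∩ B₂).card : ℝ) := by
        exact_mod_cast Finset.card_le_card (Finset.inter_subset_inter Finset.Subset.rfl hB)
      have h1 : min (c * ((A ∩ B₁).card : ℝ)) c ≤ min (c * ((A ∩ B₂).card : ℝ)) c :=
        min_le_min (mul_le_mul_of_nonneg_left hm hc0) le_rfl
      have h2 : ∑ k ∈ B₁ \ A, f {k} ≤ ∑ k ∈ B₂ \ A, f {k} :=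
        Finset.sum_le_sum_of_subset_of_nonneg
          (Finset.sdiff_subset_sdiff hB Finset.Subset.rfl) (fun k _ _ => hf0 _)
      exact add_le_add h1 h2
    · -- submodular
      intro B₁ B₂ hB v hv2
      dsimp only
      have hv1 : v ∉ B₁ := fun h => hv2 (hB h)
      by_cases hvA : v ∈ A
      · -- sums unchanged, min part increases by a step
        have hsd : ∀ B : Finset ι, insert v B \ A = B \ A := fun B =>
          Finset.insert_sdiff_of_mem _ hvA
        have hin : ∀ B : Finset ι, v ∉ B → A ∩ insert v B = insert v (A ∩ B) := by
          intro B hvB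
          ext x
          simp only [Finset.mem_inter, Finset.mem_insert]
          constructor
          · rintro ⟨hxA, rfl | hxB⟩
            · exact Or.inl rfl
            · exact Or.inr ⟨hxA, hxB⟩
          · rintro (rfl | ⟨hxA, hxB⟩)
            · exact ⟨hvA, Or.inl rfl⟩
            · exact ⟨hxA, Or.inr hxB⟩
        have hstep : ∀ B : Finset ι, v ∉ B →
            min (c * ((A ∩ insert v B).card : ℝ)) c - min (c * ((A ∩ B).card : ℝ)) c
              = if (A ∩ B).card = 0 then c else 0 := by
          intro B hvB
          rw [hin B hvB, Finset.card_insert_of_notMem (fun h => hvB (Finset.mem_inter.1 h).2)]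
          push_cast
          exact aux_min_step c hc0 _
        have e1 := hstep B₁ hv1
        have e2 := hstep B₂ hv2
        have hcardle : (A ∩ B₁).card ≤ (A ∩ B₂).card :=
          Finset.card_le_card (Finset.inter_subset_inter Finset.Subset.rfl hB)
        have : (if (A ∩ B₂).card = 0 then c else 0) ≤ (if (A ∩ B₁).card = 0 then c else 0) := by
          split_ifs with h2' h1'
          · exact le_rfl
          · omega
          · exact hc0
          · exact le_rfl
        rw [hsd B₁, hsd B₂]
        have := this
        linarith [e1, e2, this]
      · -- min part unchanged, sums increase by f {v}
        have hin : ∀ B : Finset ι, A ∩ insert v B = A ∩ B := by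
          intro B
          ext x
          simp only [Finset.mem_inter, Finset.mem_insert]
          constructor
          · rintro ⟨hxA, rfl | hxB⟩
            · exact absurd hxA hvA
            · exact ⟨hxA, hxB⟩
          · rintro ⟨hxA, hxB⟩
            exact ⟨hxA, Or.inr hxB⟩
        have hsd : ∀ B : Finset ι, v ∉ B → insert v B \ A = insert v (B \ A) := by
          intro B hvB
          rw [Finset.insert_sdiff_of_notMem _ hvA]
        have hsum : ∀ B : Finset ι, v ∉ B →
            ∑ k ∈ insert v B \ A, f {k} = f {v} + ∑ k ∈ B \ A, f {k} := by
          intro B hvB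
          rw [hsd B hvB, Finset.sum_insert (fun h => hvB (Finset.mem_sdiff.1 h).1)]
        rw [hin B₁, hin B₂, hsum B₁ hv1, hsum B₂ hv2]
        rw [← hA]
        linarith
  · -- the infimum equality
    intro B
    have hub : ∀ i : Fin (2 ^ n),
        f B ≤ min (f (e i) * ((e i ∩ B).card : ℝ)) (f (e i)) + ∑ k ∈ B \ e i, f {k} := by
      intro i
      set A : Finset ι := e i with hA
      have hsplit : (A ∩ B) ∪ (B \ A) = B := by
        ext x
        simp only [Finset.mem_union, Finset.mem_inter, Finset.mem_sdiff]
        tauto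
      have h1 : f B ≤ f (A ∩ B) + ∑ k ∈ B \ A, f {k} := by
        calc f B = f ((A ∩ B) ∪ (B \ A)) := by rw [hsplit]
        _ ≤ f (A ∩ B) + ∑ k ∈ B \ A, f {k} :=
          aux_sum_singletons f hnorm hmono hsub _ _
      have h2 : f (A ∩ B) ≤ min (f A * ((A ∩ B).card : ℝ)) (f A) := by
        refine le_min ?_ (hmono _ _ Finset.inter_subset_left)
        have h3 : f (A ∩ B) ≤ ∑ k ∈ A ∩ B, f {k} := by
          have := aux_sum_singletons f hnorm hmono hsub (A ∩ B) ∅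
          simpa [hnorm] using this
        have h4 : ∑ k ∈ A ∩ B, f {k} ≤ (A ∩ B).card • f A := by
          refine Finset.sum_le_card_nsmul _ _ _ ?_
          intro x hx
          exact hmono {x} A (Finset.singleton_subset_iff.2 (Finset.mem_inter.1 hx).1)
        rw [nsmul_eq_mul] at h4
        calc f (A ∩ B) ≤ ((A ∩ B).card : ℝ) * f A := le_trans h3 h4
        _ = f A * ((A ∩ B).card : ℝ) := mul_comm _ _
      linarith
    refine le_antisymm (le_ciInf hub) ?_
    have heq : min (f (e (e.symm B)) * ((e (e.symm B) ∩ B).card : ℝ)) (f (e (e.symm B)))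
        + ∑ k ∈ B \ e (e.symm B), f {k} = f B := by
      rw [Equiv.apply_symm_apply]
      rw [Finset.inter_self, Finset.sdiff_self, Finset.sum_empty, add_zero]
      rcases B.eq_empty_or_nonempty with h | h
      · subst h; simp [hnorm]
      · have h1 : (1 : ℝ) ≤ (B.card : ℝ) := by
          exact_mod_cast Finset.card_pos.2 h
        exact min_eq_right (le_mul_of_one_le_right (hf0 B) h1)
    calc (⨅ i : Fin (2 ^ n), (min (f (e i) * ((e i ∩ B).card : ℝ)) (f (e i))
            + ∑ k ∈ B \ e i, f {k}))
        ≤ min (f (e (e.symm B)) * ((e (e.symm B) ∩ B).card : ℝ)) (f (e (e.symm B)))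
            + ∑ k ∈ B \ e (e.symm B), f {k} := ciInf_le (Finite.bddBelow_range _) _
      _ = f B := heq
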